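/- Let f₀ : ℝⁿ → ℝ be convex and differentiable, and define Ψ(d, θ̂, P, ω, μ) = f₀(d) + (1/2)‖ω + u₁‖² + (1/2)‖μ + u₂‖², where u₁ = P^in − d − Dω − CP and u₂ = P^in − d − C B Cᵀ θ̂. Then Ψ is a convex function of (d, θ̂, P, ω, μ) ∈ ℝⁿ × ℝⁿ × ℝˡ × ℝⁿ × ℝⁿ. Moreover, for any point x = (d, θ̂, P, ω, μ) and any point x* = (d*, θ̂*, P*, ω*, μ*) satisfying P^in − d* − Dω* − CP* = 0 and P^in − d* − C B Cᵀ θ̂* = 0, the quantity V₁ := Ψ(x) − Ψ(x*) − ⟨∇f₀(d*) − ω* − μ*, d − d*⟩ − ⟨(I − D)ω*, ω − ω*⟩ − ⟨μ*, μ − μ*⟩ + ⟨ω*, C(P − P*)⟩ + ⟨μ*, C B Cᵀ(θ̂ − θ̂*)⟩ is nonnegative. -/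

import Mathlib

open Matrix

/-- Gradient inequality for a convex differentiable function (Bregman nonnegativity). -/
lemma breg_aux {n : ℕ} {f : (Fin n → ℝ) → ℝ} (hconv : ConvexOn ℝ Set.univ f)
    (hdiff : Differentiable ℝ f) (a v : Fin n → ℝ) :
    fderiv ℝ f a v ≤ f (a + v) - f a := by
  have hg : ConvexOn ℝ Set.univ (fun t : ℝ => f (t • v + a)) := by
    have h := hconv.comp_affineMap (AffineMap.lineMap a (a + v))
    convert h using 2 with t
    exacts [rfl, rfl, rfl, rfl, by simp, by simp [AffineMap.lineMap_apply, add_sub_cancel_left]]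
  have h1 : HasDerivAt (fun t : ℝ => t • v + a) v 0 := by
    simpa using ((hasDerivAt_id (0:ℝ)).smul_const v).add_const a
  have hderiv : HasDerivAt (fun t : ℝ => f (t • v + a)) (fderiv ℝ f a v) 0 := by
    have := (hdiff ((0:ℝ) • v + a)).hasFDerivAt.comp_hasDerivAt 0 h1
    simp only [zero_smul, zero_add] at this
    exact this
  have := hg.le_slope_of_hasDerivAt (Set.mem_univ (0:ℝ)) (Set.mem_univ (1:ℝ)) one_pos hderiv
  simp only [slope_def_field] at this
  calc fderiv ℝ f a v ≤ _ := this
    _ = f (a + v) - f a := by norm_num [one_smul, add_comm]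

/-- The auxiliary function `Ψ(d, θ̂, P, ω, μ) = f₀(d) + (1/2)‖ω + u₁‖² + (1/2)‖μ + u₂‖²`,
with `u₁ = P^in − d − Dω − CP` and `u₂ = P^in − d − C B Cᵀ θ̂`. -/
noncomputable def Psi {n l : ℕ} (C : Matrix (Fin n) (Fin l) ℝ)
    (B : Matrix (Fin l) (Fin l) ℝ) (D : Matrix (Fin n) (Fin n) ℝ)
    (Pin : Fin n → ℝ) (f0 : (Fin n → ℝ) → ℝ)
    (x : (Fin n → ℝ) × (Fin n → ℝ) × (Fin l → ℝ) × (Fin n → ℝ) × (Fin n → ℝ)) : ℝ :=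
  f0 x.1
    + (1 / 2) * ∑ i, (x.2.2.2.1 i
        + (Pin - x.1 - D.mulVec x.2.2.2.1 - C.mulVec x.2.2.1) i) ^ 2
    + (1 / 2) * ∑ i, (x.2.2.2.2 i
        + (Pin - x.1 - (C * B * Cᵀ).mulVec x.2.1) i) ^ 2

/-- `Ψ` is convex, and the Lyapunov component `V₁` (the Bregman-type
quantity built from `Ψ` at a point `x*` with vanishing residuals) is nonnegative. -/
theorem Psi_convex_and_V1_nonneg
    {n l : ℕ}
    (C : Matrix (Fin n) (Fin l) ℝ)
    (B : Matrix (Fin l) (Fin l) ℝ)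
    (hBdiag : ∀ e f, e ≠ f → B e f = 0) (hBpos : ∀ e, 0 < B e e)
    (D : Matrix (Fin n) (Fin n) ℝ)
    (hDdiag : ∀ i j, i ≠ j → D i j = 0) (hDpos : ∀ i, 0 < D i i)
    (Pin : Fin n → ℝ)
    (f0 : (Fin n → ℝ) → ℝ)
    (hf0conv : ConvexOn ℝ Set.univ f0) (hf0diff : Differentiable ℝ f0) :
    ConvexOn ℝ Set.univ (Psi C B D Pin f0) ∧
    ∀ (d θh ω μ ds θhs ωs μs : Fin n → ℝ) (P Ps : Fin l → ℝ),
      Pin - ds - D.mulVec ωs - C.mulVec Ps = 0 →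
      Pin - ds - (C * B * Cᵀ).mulVec θhs = 0 →
      0 ≤ Psi C B D Pin f0 (d, θh, P, ω, μ) - Psi C B D Pin f0 (ds, θhs, Ps, ωs, μs)
        - (fderiv ℝ f0 ds (d - ds) - ∑ i, (ωs i + μs i) * (d i - ds i))
        - (∑ i, (ωs i - D.mulVec ωs i) * (ω i - ωs i))
        - (∑ i, μs i * (μ i - μs i))
        + (∑ i, ωs i * C.mulVec (P - Ps) i)
        + (∑ i, μs i * (C * B * Cᵀ).mulVec (θh - θhs) i) := by
  constructor
  · -- Convexity of Ψ
    refine ⟨convex_univ, fun x _ y _ a b ha hb hab => ?_⟩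
    have h0 : f0 ((a • x + b • y).1) ≤ a * f0 x.1 + b * f0 y.1 := by
      simpa using hf0conv.2 (Set.mem_univ x.1) (Set.mem_univ y.1) ha hb hab
    have e1 : ∀ i, ((a • x + b • y).2.2.2.1 i
          + (Pin - (a • x + b • y).1 - D.mulVec (a • x + b • y).2.2.2.1
              - C.mulVec (a • x + b • y).2.2.1) i)
        = a * (x.2.2.2.1 i + (Pin - x.1 - D.mulVec x.2.2.2.1 - C.mulVec x.2.2.1) i)
          + b * (y.2.2.2.1 i + (Pin - y.1 - D.mulVec y.2.2.2.1 - C.mulVec y.2.2.1) i) := by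
      intro i
      simp only [Prod.fst_add, Prod.snd_add, Prod.smul_fst, Prod.smul_snd, Pi.sub_apply,
        Pi.add_apply, Pi.smul_apply, smul_eq_mul, Matrix.mulVec_add, Matrix.mulVec_smul]
      linear_combination (Pin i) * hab.symm
    have e2 : ∀ i, ((a • x + b • y).2.2.2.2 i
          + (Pin - (a • x + b • y).1 - (C * B * Cᵀ).mulVec (a • x + b • y).2.1) i)
        = a * (x.2.2.2.2 i + (Pin - x.1 - (C * B * Cᵀ).mulVec x.2.1) i)
          + b * (y.2.2.2.2 i + (Pin - y.1 - (C * B * Cᵀ).mulVec y.2.1) i) := by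
      intro i
      simp only [Prod.fst_add, Prod.snd_add, Prod.smul_fst, Prod.smul_snd, Pi.sub_apply,
        Pi.add_apply, Pi.smul_apply, smul_eq_mul, Matrix.mulVec_add, Matrix.mulVec_smul]
      linear_combination (Pin i) * hab.symm
    have key : ∀ (α β : ℝ), (a * α + b * β) ^ 2 ≤ a * α ^ 2 + b * β ^ 2 := by
      intro α β
      nlinarith [mul_nonneg ha hb, sq_nonneg (α - β)]
    have h1 : ∑ i, ((a • x + b • y).2.2.2.1 i
          + (Pin - (a • x + b • y).1 - D.mulVec (a • x + b • y).2.2.2.1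
              - C.mulVec (a • x + b • y).2.2.1) i) ^ 2
        ≤ a * ∑ i, (x.2.2.2.1 i + (Pin - x.1 - D.mulVec x.2.2.2.1 - C.mulVec x.2.2.1) i) ^ 2
          + b * ∑ i, (y.2.2.2.1 i + (Pin - y.1 - D.mulVec y.2.2.2.1 - C.mulVec y.2.2.1) i) ^ 2 := by
      rw [Finset.mul_sum, Finset.mul_sum, ← Finset.sum_add_distrib]
      refine Finset.sum_le_sum fun i _ => ?_
      rw [e1 i]; exact key _ _
    have h2 : ∑ i, ((a • x + b • y).2.2.2.2 i
          + (Pin - (a • x + b • y).1 - (C * B * Cᵀ).mulVec (a • x + b • y).2.1) i) ^ 2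
        ≤ a * ∑ i, (x.2.2.2.2 i + (Pin - x.1 - (C * B * Cᵀ).mulVec x.2.1) i) ^ 2
          + b * ∑ i, (y.2.2.2.2 i + (Pin - y.1 - (C * B * Cᵀ).mulVec y.2.1) i) ^ 2 := by
      rw [Finset.mul_sum, Finset.mul_sum, ← Finset.sum_add_distrib]
      refine Finset.sum_le_sum fun i _ => ?_
      rw [e2 i]; exact key _ _
    simp only [Psi, smul_eq_mul]
    linarith
  · -- Nonnegativity of V₁
    intro d θh ω μ ds θhs ωs μs P Ps h1 h2
    have hD : ∀ (v : Fin n → ℝ) i, D.mulVec v i = D i i * v i := by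
      intro v i
      rw [Matrix.mulVec, dotProduct]
      rw [Finset.sum_eq_single i (fun j _ hj => by rw [hDdiag i j (Ne.symm hj), zero_mul])
        (fun h => absurd (Finset.mem_univ i) h)]
    have hbreg : fderiv ℝ f0 ds (d - ds) ≤ f0 d - f0 ds := by
      have := breg_aux hf0conv hf0diff ds (d - ds)
      simpa using this
    have hp1 : ∀ i, Pin i = ds i + D i i * ωs i + C.mulVec Ps i := by
      intro i
      have := congrFun h1 i
      simp only [Pi.sub_apply, Pi.zero_apply] at this
      rw [hD ωs i] at this; linarith
    have hp2 : ∀ i, Pin i = ds i + (C * B * Cᵀ).mulVec θhs i := by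
      intro i
      have := congrFun h2 i
      simp only [Pi.sub_apply, Pi.zero_apply] at this
      linarith
    have hpt : ∀ i, (1/2 : ℝ) * (ω i + (Pin - d - D.mulVec ω - C.mulVec P) i) ^ 2
        + (1/2) * (μ i + (Pin - d - (C * B * Cᵀ).mulVec θh) i) ^ 2
        - (1/2) * (ωs i) ^ 2 - (1/2) * (μs i) ^ 2
        + (ωs i + μs i) * (d i - ds i)
        - (ωs i - D.mulVec ωs i) * (ω i - ωs i)
        - μs i * (μ i - μs i)
        + ωs i * C.mulVec (P - Ps) i
        + μs i * (C * B * Cᵀ).mulVec (θh - θhs) i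
        = (1/2) * ((ω i + (Pin - d - D.mulVec ω - C.mulVec P) i - ωs i)) ^ 2
        + (1/2) * ((μ i + (Pin - d - (C * B * Cᵀ).mulVec θh) i - μs i)) ^ 2 := by
      intro i
      simp only [Pi.sub_apply, Matrix.mulVec_sub, hD ω, hD ωs]
      linear_combination (ωs i) * hp1 i + (μs i) * hp2 i
    have hkey := Finset.sum_congr rfl (fun i (_ : i ∈ Finset.univ) => hpt i)
    simp only [Finset.sum_add_distrib, Finset.sum_sub_distrib, ← Finset.mul_sum] at hkey
    have hsq1 : (0:ℝ)
        ≤ (1/2) * ∑ i, ((ω i + (Pin - d - D.mulVec ω - C.mulVec P) i - ωs i)) ^ 2 := by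
      positivity
    have hsq2 : (0:ℝ)
        ≤ (1/2) * ∑ i, ((μ i + (Pin - d - (C * B * Cᵀ).mulVec θh) i - μs i)) ^ 2 := by
      positivity
    simp only [Psi]
    rw [h1, h2]
    simp only [Pi.zero_apply, add_zero]
    linarith
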